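/- Work on a probability space with X a random element of a measurable space S and Y, A bounded real random variables; let b, p : S → ℝ be measurable with b(X) a version of E[Y | σ(X)] and p(X) a version of E[A | σ(X)]; let b̂, p̂ : S → ℝ and z̄ : S → ℝᵏ be bounded measurable with Ω := E[z̄(X) z̄(X)ᵀ] invertible. Let O₁ = (Y₁, A₁, X₁), …, Oₙ = (Yₙ, Aₙ, Xₙ) (n ≥ 2) be i.i.d. copies of (Y, A, X), and define the second-order U-statistic ÎF₂₂ := (1/(n(n−1))) Σ_{1 ≤ i₁ ≠ i₂ ≤ n} (Y_{i₁} − b̂(X_{i₁})) z̄(X_{i₁})ᵀ Ω⁻¹ z̄(X_{i₂}) (A_{i₂} − p̂(X_{i₂})). Then E[ÎF₂₂] = E[(b(X) − b̂(X)) z̄(X)ᵀ] Ω⁻¹ E[z̄(X)(p(X) − p̂(X))], i.e. ÎF₂₂ is an unbiased estimator of the projected bias cBias_{θ,k}(ψ̂₁) = ⟨Π[b−b̂ | Z̄_k], Π[p−p̂ | Z̄_k]⟩ in L²(law of X). -/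

import Mathlib

open MeasureTheory

/-- Integrability of a bounded measurable function on a finite measure space. -/
lemma aux_integrable_of_bound {Ω : Type*} [MeasurableSpace Ω] (P : Measure Ω)
    [IsFiniteMeasure P] (f : Ω → ℝ) (hf : Measurable f) (D : ℝ) (h : ∀ ω, |f ω| ≤ D) :
    Integrable f P :=
  (integrable_const D).mono' hf.aestronglyMeasurable
    (Filter.Eventually.of_forall fun ω => by simpa [Real.norm_eq_abs] using h ω)

/-- Factorization of the integral of a product of functions of two distinct
coordinates over a product probability measure. -/
lemma aux_integral_pi_mul {Ω : Type*} [MeasurableSpace Ω] (P : Measure Ω)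
    [IsProbabilityMeasure P] {n : ℕ} (i₁ i₂ : Fin n) (hne : i₁ ≠ i₂) (f g : Ω → ℝ) :
    ∫ ω : Fin n → Ω, f (ω i₁) * g (ω i₂) ∂(Measure.pi fun _ : Fin n => P)
      = (∫ ω, f ω ∂P) * ∫ ω, g ω ∂P := by
  letI : MeasureSpace Ω := ⟨P⟩
  haveI : SigmaFinite (volume : Measure Ω) := (inferInstance : SigmaFinite P)
  set h : Fin n → Ω → ℝ := fun i => if i = i₁ then f else if i = i₂ then g else fun _ => 1
    with hh
  have hπ : (Measure.pi fun _ : Fin n => P) = (volume : Measure (Fin n → Ω)) := rfl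
  have key : ∀ ω : Fin n → Ω, f (ω i₁) * g (ω i₂) = ∏ i, h i (ω i) := by
    intro ω
    have h1 : ∏ i, h i (ω i) = ∏ i ∈ ({i₁, i₂} : Finset (Fin n)), h i (ω i) := by
      refine (Finset.prod_subset (Finset.subset_univ _) fun x _ hx => ?_).symm
      simp only [Finset.mem_insert, Finset.mem_singleton, not_or] at hx
      simp [hh, hx.1, hx.2]
    rw [h1, Finset.prod_pair hne]
    simp [hh, Ne.symm hne]
  have key2 : ∀ i, ∫ ω, h i ω ∂P = if i = i₁ then ∫ ω, f ω ∂P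
      else if i = i₂ then ∫ ω, g ω ∂P else 1 := by
    intro i
    by_cases h1 : i = i₁ <;> by_cases h2 : i = i₂ <;>
      simp [hh, h1, h2, Ne.symm hne]
  calc ∫ ω : Fin n → Ω, f (ω i₁) * g (ω i₂) ∂(Measure.pi fun _ : Fin n => P)
      = ∫ ω : Fin n → Ω, ∏ i, h i (ω i) := by
        rw [hπ]; exact integral_congr_ae (Filter.Eventually.of_forall fun ω => key ω)
    _ = ∏ i, ∫ ω, h i ω := integral_fintype_prod_volume_eq_prod h
    _ = ∏ i, ∫ ω, h i ω ∂P := rfl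
    _ = ∏ i ∈ ({i₁, i₂} : Finset (Fin n)), ∫ ω, h i ω ∂P := by
        refine (Finset.prod_subset (Finset.subset_univ _) fun x _ hx => ?_).symm
        simp only [Finset.mem_insert, Finset.mem_singleton, not_or] at hx
        rw [key2, if_neg hx.1, if_neg hx.2]
    _ = (∫ ω, f ω ∂P) * ∫ ω, g ω ∂P := by
        rw [Finset.prod_pair hne, key2, key2, if_pos rfl, if_neg (Ne.symm hne), if_pos rfl]

/-- The tower property: `E[Y · g(X)] = E[b(X) · g(X)]` when `b(X)` is a version of
`E[Y | σ(X)]` and `g` is bounded measurable. -/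
lemma aux_condexp_key {Ω S : Type*} [MeasurableSpace Ω] [MeasurableSpace S]
    (P : Measure Ω) [IsProbabilityMeasure P] (X : Ω → S) (hX : Measurable X)
    (Y : Ω → ℝ) (hY : Measurable Y) (C : ℝ) (hC : 0 ≤ C) (hYb : ∀ ω, |Y ω| ≤ C)
    (b : S → ℝ)
    (hbX : (fun ω => b (X ω)) =ᵐ[P] P[Y | MeasurableSpace.comap X inferInstance])
    (g : S → ℝ) (hg : Measurable g) (D : ℝ) (hD : 0 ≤ D) (hgB : ∀ s, |g s| ≤ D) :
    ∫ ω, Y ω * g (X ω) ∂P = ∫ ω, b (X ω) * g (X ω) ∂P := by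
  have hm : MeasurableSpace.comap X inferInstance ≤ ‹MeasurableSpace Ω› := hX.comap_le
  have hXm : Measurable[MeasurableSpace.comap X inferInstance] X := fun s hs => ⟨s, hs, rfl⟩
  have hgXm : StronglyMeasurable[MeasurableSpace.comap X inferInstance]
      fun ω => g (X ω) := (hg.comp hXm).stronglyMeasurable
  have hYint : Integrable Y P := aux_integrable_of_bound P Y hY C hYb
  have hprod : Integrable ((fun ω => g (X ω)) * Y) P := by
    refine aux_integrable_of_bound P _ ((hg.comp hX).mul hY) (D * C) fun ω => ?_
    simp only [Pi.mul_apply, abs_mul]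
    exact mul_le_mul (hgB _) (hYb _) (abs_nonneg _) hD
  have h1 : P[(fun ω => g (X ω)) * Y | MeasurableSpace.comap X inferInstance]
      =ᵐ[P] (fun ω => g (X ω)) * P[Y | MeasurableSpace.comap X inferInstance] :=
    condExp_mul_of_stronglyMeasurable_left hgXm hprod hYint
  calc ∫ ω, Y ω * g (X ω) ∂P
      = ∫ ω, ((fun ω => g (X ω)) * Y) ω ∂P := by
        refine integral_congr_ae (Filter.Eventually.of_forall fun ω => ?_)
        simp [mul_comm]
    _ = ∫ ω, (P[(fun ω => g (X ω)) * Y | MeasurableSpace.comap X inferInstance]) ω ∂P :=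
        (integral_condExp (μ := P) (f := (fun ω => g (X ω)) * Y) hm).symm
    _ = ∫ ω, ((fun ω => g (X ω)) * P[Y | MeasurableSpace.comap X inferInstance]) ω ∂P :=
        integral_congr_ae h1
    _ = ∫ ω, b (X ω) * g (X ω) ∂P := by
        refine integral_congr_ae ?_
        filter_upwards [hbX] with ω hω
        simp [← hω, mul_comm]

/-- Unbiasedness of the second-order influence function statistic (Theorem `thm:soif`(i)):
over `n ≥ 2` i.i.d. copies (modelled by the product measure on `Fin n → Ω`),
`E[ÎF₂₂] = E[(b(X) - b̂(X)) z̄(X)ᵀ] Ω⁻¹ E[z̄(X) (p(X) - p̂(X))]`, the projected bias. -/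
theorem stmt4 {Ω S : Type*} [MeasurableSpace Ω] [MeasurableSpace S]
    (P : Measure Ω) [IsProbabilityMeasure P]
    (X : Ω → S) (hX : Measurable X)
    (Y A : Ω → ℝ) (hY : Measurable Y) (hA : Measurable A)
    (C : ℝ) (hYb : ∀ ω, |Y ω| ≤ C) (hAb : ∀ ω, |A ω| ≤ C)
    (b p bh ph : S → ℝ) (hb : Measurable b) (hp : Measurable p)
    (hbh : Measurable bh) (hph : Measurable ph)
    (hbhB : ∀ s, |bh s| ≤ C) (hphB : ∀ s, |ph s| ≤ C)
    (hbX : (fun ω => b (X ω)) =ᵐ[P] P[Y | MeasurableSpace.comap X inferInstance])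
    (hpX : (fun ω => p (X ω)) =ᵐ[P] P[A | MeasurableSpace.comap X inferInstance])
    {k : ℕ} (z : S → Fin k → ℝ) (hz : ∀ j, Measurable fun s => z s j)
    (hzB : ∀ s j, |z s j| ≤ C)
    (G : Matrix (Fin k) (Fin k) ℝ)
    (hG : ∀ i j, G i j = ∫ ω, z (X ω) i * z (X ω) j ∂P)
    (hGinv : IsUnit G)
    (n : ℕ) (hn : 2 ≤ n) :
    (∫ ω : Fin n → Ω,
        ((n : ℝ) * ((n : ℝ) - 1))⁻¹ *
          ∑ i₁ : Fin n, ∑ i₂ : Fin n,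
            (if i₁ = i₂ then 0 else
              (Y (ω i₁) - bh (X (ω i₁))) *
                (∑ a, ∑ c, z (X (ω i₁)) a * G⁻¹ a c * z (X (ω i₂)) c) *
                (A (ω i₂) - ph (X (ω i₂))))
        ∂(Measure.pi fun _ : Fin n => P))
      = ∑ a, ∑ c, (∫ ω, (b (X ω) - bh (X ω)) * z (X ω) a ∂P) * G⁻¹ a c *
          (∫ ω, z (X ω) c * (p (X ω) - ph (X ω)) ∂P) := by
  -- Ω is nonempty, hence C ≥ 0
  have hΩ : Nonempty Ω := by
    by_contra h
    rw [not_nonempty_iff] at h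
    have h1 : P Set.univ = 1 := measure_univ
    simp [Set.univ_eq_empty_iff.mpr h] at h1
  have hC0 : 0 ≤ C := (abs_nonneg _).trans (hYb (Classical.arbitrary Ω))
  -- the two factor functions
  set F : Fin k → Ω → ℝ := fun a ω => (Y ω - bh (X ω)) * z (X ω) a with hF
  set H : Fin k → Ω → ℝ := fun c ω => z (X ω) c * (A ω - ph (X ω)) with hH
  have hFm : ∀ a, Measurable (F a) := fun a =>
    (hY.sub (hbh.comp hX)).mul ((hz a).comp hX)
  have hHm : ∀ c, Measurable (H c) := fun c =>
    ((hz c).comp hX).mul (hA.sub (hph.comp hX))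
  have hFb : ∀ a ω, |F a ω| ≤ 2 * C * C := by
    intro a ω
    rw [hF, abs_mul]
    refine mul_le_mul ((abs_sub _ _).trans ?_) (hzB _ _) (abs_nonneg _) (by linarith)
    linarith [hYb ω, hbhB (X ω)]
  have hHb : ∀ c ω, |H c ω| ≤ C * (2 * C) := by
    intro c ω
    rw [hH, abs_mul]
    refine mul_le_mul (hzB _ _) ((abs_sub _ _).trans ?_) (abs_nonneg _) hC0
    linarith [hAb ω, hphB (X ω)]
  -- the elementary summands on the product space
  set T : Fin n → Fin n → Fin k → Fin k → (Fin n → Ω) → ℝ :=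
    fun i₁ i₂ a c ω => if i₁ = i₂ then 0 else F a (ω i₁) * G⁻¹ a c * H c (ω i₂) with hT
  have hTint : ∀ i₁ i₂ a c, Integrable (T i₁ i₂ a c) (Measure.pi fun _ : Fin n => P) := by
    intro i₁ i₂ a c
    by_cases h : i₁ = i₂
    · simp only [hT, if_pos h]
      exact integrable_zero _ _ _
    · simp only [hT, if_neg h]
      refine aux_integrable_of_bound _ _
        ((((hFm a).comp (measurable_pi_apply i₁)).mul measurable_const).mul
          ((hHm c).comp (measurable_pi_apply i₂)))
        ((2 * C * C) * |G⁻¹ a c| * (C * (2 * C))) fun ω => ?_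
      rw [abs_mul, abs_mul]
      have h1 : 0 ≤ 2 * C * C := by positivity
      refine mul_le_mul (mul_le_mul (hFb a _) le_rfl (abs_nonneg _) h1) (hHb c _)
        (abs_nonneg _) (by positivity)
  -- value of each elementary integral
  have hKey : ∀ i₁ i₂ a c, (∫ ω, T i₁ i₂ a c ω ∂(Measure.pi fun _ : Fin n => P))
      = if i₁ = i₂ then 0 else
          G⁻¹ a c * ((∫ ω, F a ω ∂P) * ∫ ω, H c ω ∂P) := by
    intro i₁ i₂ a c
    by_cases h : i₁ = i₂
    · simp [hT, h]
    · rw [if_neg h]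
      have : ∀ ω : Fin n → Ω, T i₁ i₂ a c ω
          = G⁻¹ a c * (F a (ω i₁) * H c (ω i₂)) := by
        intro ω; simp only [hT, if_neg h]; ring
      rw [integral_congr_ae (Filter.Eventually.of_forall this), integral_const_mul,
        aux_integral_pi_mul P i₁ i₂ h]
  -- identify the two marginal integrals via the conditional expectation property
  have hFI : ∀ a, ∫ ω, F a ω ∂P = ∫ ω, (b (X ω) - bh (X ω)) * z (X ω) a ∂P := by
    intro a
    have h1 : ∫ ω, Y ω * z (X ω) a ∂P = ∫ ω, b (X ω) * z (X ω) a ∂P :=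
      aux_condexp_key P X hX Y hY C hC0 hYb b hbX (fun s => z s a) (hz a) C hC0
        (fun s => hzB s a)
    have e1 : ∀ ω, F a ω = Y ω * z (X ω) a - bh (X ω) * z (X ω) a := by
      intro ω; rw [hF]; ring
    have e2 : ∀ ω, (b (X ω) - bh (X ω)) * z (X ω) a
        = b (X ω) * z (X ω) a - bh (X ω) * z (X ω) a := by intro ω; ring
    have ibz : Integrable (fun ω => bh (X ω) * z (X ω) a) P := by
      refine aux_integrable_of_bound P _ ((hbh.comp hX).mul ((hz a).comp hX)) (C * C)
        fun ω => ?_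
      rw [abs_mul]; exact mul_le_mul (hbhB _) (hzB _ _) (abs_nonneg _) hC0
    have iYz : Integrable (fun ω => Y ω * z (X ω) a) P := by
      refine aux_integrable_of_bound P _ (hY.mul ((hz a).comp hX)) (C * C) fun ω => ?_
      rw [abs_mul]; exact mul_le_mul (hYb _) (hzB _ _) (abs_nonneg _) hC0
    have ibz2 : Integrable (fun ω => b (X ω) * z (X ω) a) P := by
      have hce : Integrable
          (fun ω => z (X ω) a * (P[Y | MeasurableSpace.comap X inferInstance]) ω) P :=
        integrable_condExp.bdd_mul
          (((hz a).comp hX : Measurable fun ω => z (X ω) a).aestronglyMeasurable)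
          (Filter.Eventually.of_forall fun ω => by simpa [Real.norm_eq_abs] using hzB (X ω) a)
      refine hce.congr ?_
      filter_upwards [hbX] with ω hω
      rw [← hω]; ring
    rw [integral_congr_ae (Filter.Eventually.of_forall e1),
      integral_congr_ae (Filter.Eventually.of_forall e2),
      integral_sub iYz ibz, integral_sub ibz2 ibz, h1]
  have hHI : ∀ c, ∫ ω, H c ω ∂P = ∫ ω, z (X ω) c * (p (X ω) - ph (X ω)) ∂P := by
    intro c
    have h1 : ∫ ω, A ω * z (X ω) c ∂P = ∫ ω, p (X ω) * z (X ω) c ∂P :=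
      aux_condexp_key P X hX A hA C hC0 hAb p hpX (fun s => z s c) (hz c) C hC0
        (fun s => hzB s c)
    have e1 : ∀ ω, H c ω = A ω * z (X ω) c - ph (X ω) * z (X ω) c := by
      intro ω; rw [hH]; ring
    have e2 : ∀ ω, z (X ω) c * (p (X ω) - ph (X ω))
        = p (X ω) * z (X ω) c - ph (X ω) * z (X ω) c := by intro ω; ring
    have ibz : Integrable (fun ω => ph (X ω) * z (X ω) c) P := by
      refine aux_integrable_of_bound P _ ((hph.comp hX).mul ((hz c).comp hX)) (C * C)
        fun ω => ?_
      rw [abs_mul]; exact mul_le_mul (hphB _) (hzB _ _) (abs_nonneg _) hC0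
    have iAz : Integrable (fun ω => A ω * z (X ω) c) P := by
      refine aux_integrable_of_bound P _ (hA.mul ((hz c).comp hX)) (C * C) fun ω => ?_
      rw [abs_mul]; exact mul_le_mul (hAb _) (hzB _ _) (abs_nonneg _) hC0
    have ibz2 : Integrable (fun ω => p (X ω) * z (X ω) c) P := by
      have hce : Integrable
          (fun ω => z (X ω) c * (P[A | MeasurableSpace.comap X inferInstance]) ω) P :=
        integrable_condExp.bdd_mul
          (((hz c).comp hX : Measurable fun ω => z (X ω) c).aestronglyMeasurable)
          (Filter.Eventually.of_forall fun ω => by simpa [Real.norm_eq_abs] using hzB (X ω) c)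
      refine hce.congr ?_
      filter_upwards [hpX] with ω hω
      rw [← hω]; ring
    rw [integral_congr_ae (Filter.Eventually.of_forall e1),
      integral_congr_ae (Filter.Eventually.of_forall e2),
      integral_sub iAz ibz, integral_sub ibz2 ibz, h1]
  -- the target constant
  set K : ℝ := ∑ a, ∑ c, G⁻¹ a c * ((∫ ω, F a ω ∂P) * ∫ ω, H c ω ∂P) with hK
  -- pointwise rewriting of the integrand
  have hpoint : ∀ ω : Fin n → Ω,
      (∑ i₁ : Fin n, ∑ i₂ : Fin n,
        (if i₁ = i₂ then 0 else
          (Y (ω i₁) - bh (X (ω i₁))) *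
            (∑ a, ∑ c, z (X (ω i₁)) a * G⁻¹ a c * z (X (ω i₂)) c) *
            (A (ω i₂) - ph (X (ω i₂)))))
      = ∑ i₁ : Fin n, ∑ i₂ : Fin n, ∑ a, ∑ c, T i₁ i₂ a c ω := by
    intro ω
    refine Finset.sum_congr rfl fun i₁ _ => Finset.sum_congr rfl fun i₂ _ => ?_
    by_cases h : i₁ = i₂
    · simp [hT, h]
    · rw [if_neg h]
      simp only [hT, if_neg h, hF, hH, Finset.mul_sum, Finset.sum_mul]
      exact Finset.sum_congr rfl fun a _ => Finset.sum_congr rfl fun c _ => by ring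
  -- compute the integral
  have hInt : (∫ ω : Fin n → Ω,
      ((n : ℝ) * ((n : ℝ) - 1))⁻¹ *
        ∑ i₁ : Fin n, ∑ i₂ : Fin n,
          (if i₁ = i₂ then 0 else
            (Y (ω i₁) - bh (X (ω i₁))) *
              (∑ a, ∑ c, z (X (ω i₁)) a * G⁻¹ a c * z (X (ω i₂)) c) *
              (A (ω i₂) - ph (X (ω i₂))))
      ∂(Measure.pi fun _ : Fin n => P))
      = ((n : ℝ) * ((n : ℝ) - 1))⁻¹ *
          ∑ i₁ : Fin n, ∑ i₂ : Fin n,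
            (if i₁ = i₂ then 0 else K) := by
    simp_rw [hpoint]
    rw [integral_const_mul]
    congr 1
    rw [integral_finset_sum _ fun i₁ _ => integrable_finset_sum _ fun i₂ _ =>
      integrable_finset_sum _ fun a _ => integrable_finset_sum _ fun c _ => hTint i₁ i₂ a c]
    refine Finset.sum_congr rfl fun i₁ _ => ?_
    rw [integral_finset_sum _ fun i₂ _ =>
      integrable_finset_sum _ fun a _ => integrable_finset_sum _ fun c _ => hTint i₁ i₂ a c]
    refine Finset.sum_congr rfl fun i₂ _ => ?_
    rw [integral_finset_sum _ fun a _ =>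
      integrable_finset_sum _ fun c _ => hTint i₁ i₂ a c]
    by_cases h : i₁ = i₂
    · simp only [if_pos h]
      refine Finset.sum_eq_zero fun a _ => ?_
      rw [integral_finset_sum _ fun c _ => hTint i₁ i₂ a c]
      exact Finset.sum_eq_zero fun c _ => by rw [hKey, if_pos h]
    · rw [if_neg h, hK]
      refine Finset.sum_congr rfl fun a _ => ?_
      rw [integral_finset_sum _ fun c _ => hTint i₁ i₂ a c]
      exact Finset.sum_congr rfl fun c _ => by rw [hKey, if_neg h]
  -- count off-diagonal pairs
  have hcount : (∑ i₁ : Fin n, ∑ i₂ : Fin n, (if i₁ = i₂ then (0:ℝ) else K))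
      = ((n : ℝ) * ((n : ℝ) - 1)) * K := by
    have h1 : ∀ i₁ : Fin n, (∑ i₂ : Fin n, if i₁ = i₂ then (0:ℝ) else K)
        = ((n : ℝ) - 1) * K := by
      intro i₁
      have : ∀ i₂ : Fin n, (if i₁ = i₂ then (0:ℝ) else K)
          = K - (if i₁ = i₂ then K else 0) := by
        intro i₂; split_ifs <;> ring
      rw [Finset.sum_congr rfl fun i₂ _ => this i₂, Finset.sum_sub_distrib,
        Finset.sum_const, Finset.sum_ite_eq, if_pos (Finset.mem_univ i₁),
        Finset.card_univ, Fintype.card_fin, nsmul_eq_mul]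
      ring
    rw [Finset.sum_congr rfl fun i₁ _ => h1 i₁, Finset.sum_const,
      Finset.card_univ, Fintype.card_fin, nsmul_eq_mul]
    ring
  have hn2 : (2 : ℝ) ≤ (n : ℝ) := by exact_mod_cast hn
  have hnn : ((n : ℝ) * ((n : ℝ) - 1)) ≠ 0 :=
    mul_ne_zero (by linarith) (by linarith)
  rw [hInt, hcount, ← mul_assoc, inv_mul_cancel₀ hnn, one_mul, hK]
  refine Finset.sum_congr rfl fun a _ => Finset.sum_congr rfl fun c _ => ?_
  rw [hFI, hHI]
  ring
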